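/- Let n be a nonempty finite type, P, Π, D ∈ Matrix n n ℝ, where Π has all rows equal to some vector π : n → ℝ (Π i j = π j for all i, j), D has zero row sums (∑_j D i j = 0 for every i), and there exist C ≥ 0 and r ∈ [0,1) with ‖P^l − Π‖ ≤ C·r^l for all l ∈ ℕ. Then the limit lim_{t→∞} ∑_{l=1}^{t} P^{t-l} * D * P^{l-1} exists and equals Π * (∑_{l=0}^∞ D * P^l), where the series on the right converges in Matrix n n ℝ. -/

import Mathlib

attribute [local instance] Matrix.linftyOpNormedRing Matrix.linftyOpNormedAlgebra

/-- Proposition 1 (Infinite Gradient Series Simplification). -/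
theorem infinite_gradient_series_simplification
    {n : Type*} [Fintype n] [Nonempty n] [DecidableEq n]
    (P Pi D : Matrix n n ℝ) (π : n → ℝ)
    (hPi : ∀ i j, Pi i j = π j)
    (hD : D.mulVec (fun _ => (1 : ℝ)) = 0)
    (C : ℝ) (hC : 0 ≤ C) (r : ℝ) (hr0 : 0 ≤ r) (hr1 : r < 1)
    (hgeo : ∀ l : ℕ, ‖P ^ l - Pi‖ ≤ C * r ^ l) :
    Summable (fun l : ℕ => D * P ^ l) ∧
      Filter.Tendsto (fun t : ℕ => ∑ l ∈ Finset.Icc 1 t, P ^ (t - l) * D * P ^ (l - 1))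
        Filter.atTop (nhds (Pi * (∑' l : ℕ, D * P ^ l))) := by
  have hDPi : D * Pi = 0 := by
    ext i j
    have h := congrFun hD i
    simp only [Matrix.mulVec, dotProduct, mul_one, _root_.Pi.zero_apply] at h
    simp [Matrix.mul_apply, hPi, ← Finset.sum_mul, h]
  have key : ∀ l : ℕ, D * P ^ l = D * (P ^ l - Pi) := by
    intro l; rw [Matrix.mul_sub, hDPi, sub_zero]
  have hbound : ∀ l : ℕ, ‖D * P ^ l‖ ≤ ‖D‖ * (C * r ^ l) := by
    intro l
    rw [key l]
    calc ‖D * (P ^ l - Pi)‖ ≤ ‖D‖ * ‖P ^ l - Pi‖ := norm_mul_le _ _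
      _ ≤ ‖D‖ * (C * r ^ l) := by
          exact mul_le_mul_of_nonneg_left (hgeo l) (norm_nonneg _)
  have hsum : Summable (fun l : ℕ => D * P ^ l) := by
    apply Summable.of_norm_bounded (((summable_geometric_of_lt_one hr0 hr1).mul_left C).mul_left ‖D‖) hbound
  refine ⟨hsum, ?_⟩
  -- the "main" part g
  set g : ℕ → Matrix n n ℝ := fun t => ∑ l ∈ Finset.Icc 1 t, Pi * D * P ^ (l - 1) with hg_def
  have hg_eq : ∀ t, g t = Pi * ∑ m ∈ Finset.range t, D * P ^ m := by
    intro t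
    rw [hg_def]
    simp only
    rw [← Finset.Ico_add_one_right_eq_Icc, Finset.sum_Ico_eq_sum_range]
    simp only [Nat.succ_sub_one, add_tsub_cancel_left]
    rw [Finset.mul_sum]
    refine Finset.sum_congr rfl fun m _ => ?_
    rw [mul_assoc]
  have hg : Filter.Tendsto g Filter.atTop (nhds (Pi * ∑' l : ℕ, D * P ^ l)) := by
    have := (hsum.hasSum.tendsto_sum_nat).const_mul Pi
    refine this.congr fun t => (hg_eq t).symm
  -- the error part
  set f : ℕ → Matrix n n ℝ := fun t => ∑ l ∈ Finset.Icc 1 t, P ^ (t - l) * D * P ^ (l - 1) with hf_def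
  have herr_bound : ∀ t : ℕ, ‖f t - g t‖ ≤ (t : ℝ) * (C * (‖D‖ * (C * r ^ (t - 1)))) := by
    intro t
    have : f t - g t = ∑ l ∈ Finset.Icc 1 t, (P ^ (t - l) - Pi) * D * P ^ (l - 1) := by
      rw [hf_def, hg_def, ← Finset.sum_sub_distrib]
      refine Finset.sum_congr rfl fun l _ => ?_
      rw [Matrix.sub_mul, Matrix.sub_mul]
    rw [this]
    calc ‖∑ l ∈ Finset.Icc 1 t, (P ^ (t - l) - Pi) * D * P ^ (l - 1)‖
        ≤ ∑ l ∈ Finset.Icc 1 t, ‖(P ^ (t - l) - Pi) * D * P ^ (l - 1)‖ :=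
          norm_sum_le _ _
      _ ≤ ∑ l ∈ Finset.Icc 1 t, C * (‖D‖ * (C * r ^ (t - 1))) := by
          refine Finset.sum_le_sum fun l hl => ?_
          rw [Finset.mem_Icc] at hl
          have hterm : (P ^ (t - l) - Pi) * D * P ^ (l - 1)
              = (P ^ (t - l) - Pi) * (D * (P ^ (l - 1) - Pi)) := by
            rw [mul_assoc, ← key]
          rw [hterm]
          have h1 : ‖(P ^ (t - l) - Pi) * (D * (P ^ (l - 1) - Pi))‖
              ≤ ‖P ^ (t - l) - Pi‖ * (‖D‖ * ‖P ^ (l - 1) - Pi‖) := by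
            calc _ ≤ ‖P ^ (t - l) - Pi‖ * ‖D * (P ^ (l - 1) - Pi)‖ := norm_mul_le _ _
              _ ≤ _ := mul_le_mul_of_nonneg_left (norm_mul_le _ _) (norm_nonneg _)
          refine h1.trans ?_
          have h2 : ‖P ^ (t - l) - Pi‖ * (‖D‖ * ‖P ^ (l - 1) - Pi‖)
              ≤ (C * r ^ (t - l)) * (‖D‖ * (C * r ^ (l - 1))) := by
            refine mul_le_mul (hgeo _) (mul_le_mul_of_nonneg_left (hgeo _) (norm_nonneg D)) (by positivity) (by positivity)
          refine h2.trans ?_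
          have hexp : r ^ (t - l) * r ^ (l - 1) = r ^ (t - 1) := by
            rw [← pow_add]
            congr 1
            omega
          refine le_of_eq ?_
          rw [← hexp]; ring
      _ = (t : ℝ) * (C * (‖D‖ * (C * r ^ (t - 1)))) := by
          rw [Finset.sum_const, Nat.card_Icc]
          simp [nsmul_eq_mul]
  -- the bound tends to zero
  have hb0 : Filter.Tendsto (fun s : ℕ => ((s : ℝ) + 1) * (C * (‖D‖ * (C * r ^ s))))
      Filter.atTop (nhds 0) := by
    have h1 : Summable (fun s : ℕ => ((s : ℝ) + 1) * (C * (‖D‖ * (C * r ^ s)))) := by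
      have hs1 : Summable (fun s : ℕ => (s : ℝ) ^ 1 * r ^ s) :=
        summable_pow_mul_geometric_of_norm_lt_one 1 (by rwa [Real.norm_eq_abs, abs_of_nonneg hr0])
      have hs2 : Summable (fun s : ℕ => ((s : ℝ) + 1) * r ^ s) := by
        simpa [pow_one, add_mul] using hs1.add (summable_geometric_of_lt_one hr0 hr1)
      have := hs2.mul_left (C * ‖D‖ * C)
      refine this.congr fun s => by ring
    simpa using h1.tendsto_atTop_zero
  have hb : Filter.Tendsto (fun t : ℕ => (t : ℝ) * (C * (‖D‖ * (C * r ^ (t - 1)))))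
      Filter.atTop (nhds 0) := by
    have hcomp := hb0.comp (Filter.tendsto_sub_atTop_nat 1)
    refine Filter.Tendsto.congr' ?_ hcomp
    filter_upwards [Filter.eventually_ge_atTop 1] with t ht
    simp only [Function.comp_apply]
    congr 1
    rw [Nat.cast_sub ht]
    push_cast
    ring
  have herr : Filter.Tendsto (fun t => f t - g t) Filter.atTop (nhds 0) :=
    squeeze_zero_norm herr_bound hb
  have := hg.add herr
  rw [add_zero] at this
  refine this.congr fun t => by rw [add_sub_cancel]
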